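/- Let k be a field of characteristic zero, (A, ∗, ∘) a finite-dimensional pre-Poisson algebra and r ∈ A ⊗ A a symmetric solution of the pre-Poisson Yang–Baxter equation, so that ϑ_r(a) = (id ⊗ (L+R)(a) − L(a) ⊗ id)(r) and θ_r(a) = (L̂(a) ⊗ id + id ⊗ (L̂−R̂)(a))(r) make (A, ∗, ∘, ϑ_r, θ_r) a triangular pre-Poisson bialgebra. Let (B, ⋄, ω) be a quadratic perm algebra with basis {eⱼ} and dual basis {fⱼ}, write r̂ = Σᵢ Σⱼ (xᵢ ⊗ eⱼ) ⊗ (yᵢ ⊗ fⱼ), and let Δ(a ⊗ b) = (id ⊗ id + τ)(ϑ_r(a) • ν_ω(b)) and δ(a ⊗ b) = (id ⊗ id − τ)(θ_r(a) • ν_ω(b)) be the coproducts of the induced Poisson bialgebra on (A ⊗ B, ·, [−,−]). Then for all a ∈ A, b ∈ B: Δ(a ⊗ b) = (id ⊗ L(a⊗b) − L(a⊗b) ⊗ id)(r̂) and δ(a ⊗ b) = (id ⊗ ad(a⊗b) + ad(a⊗b) ⊗ id)(r̂), where L(u)v = u·v and ad(u)v = [u,v] in A ⊗ B; hence the induced Poisson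 bialgebra is the triangular Poisson bialgebra associated with the skew-symmetric PYBE solution r̂. -/

import Mathlib

open TensorProduct

noncomputable section

def IsZinbiel {k A : Type} [Field k] [AddCommGroup A] [Module k A]
    (ast : A →ₗ[k] A →ₗ[k] A) : Prop :=
  ∀ a₁ a₂ a₃ : A, ast a₁ (ast a₂ a₃) = ast (ast a₁ a₂) a₃ + ast (ast a₂ a₁) a₃

def IsPreLie {k A : Type} [Field k] [AddCommGroup A] [Module k A]
    (circ : A →ₗ[k] A →ₗ[k] A) : Prop :=
  ∀ a₁ a₂ a₃ : A,
    circ (circ a₁ a₂) a₃ - circ a₁ (circ a₂ a₃)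
      = circ (circ a₂ a₁) a₃ - circ a₂ (circ a₁ a₃)

def IsPerm {k B : Type} [Field k] [AddCommGroup B] [Module k B]
    (dia : B →ₗ[k] B →ₗ[k] B) : Prop :=
  ∀ b₁ b₂ b₃ : B,
    dia b₁ (dia b₂ b₃) = dia (dia b₁ b₂) b₃ ∧
    dia (dia b₁ b₂) b₃ = dia (dia b₂ b₁) b₃

def IsPrePoisson {k A : Type} [Field k] [AddCommGroup A] [Module k A]
    (ast circ : A →ₗ[k] A →ₗ[k] A) : Prop :=
  IsZinbiel ast ∧ IsPreLie circ ∧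
  (∀ a₁ a₂ a₃ : A,
    ast (circ a₁ a₂ - circ a₂ a₁) a₃ = circ a₁ (ast a₂ a₃) - ast a₂ (circ a₁ a₃)) ∧
  (∀ a₁ a₂ a₃ : A,
    circ (ast a₁ a₂ + ast a₂ a₁) a₃ = ast a₁ (circ a₂ a₃) + ast a₂ (circ a₁ a₃))

def IsPoisson {k P : Type} [Field k] [AddCommGroup P] [Module k P]
    (mul br : P →ₗ[k] P →ₗ[k] P) : Prop :=
  (∀ u v : P, mul u v = mul v u) ∧
  (∀ u v w : P, mul (mul u v) w = mul u (mul v w)) ∧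
  (∀ u v : P, br u v = - br v u) ∧
  (∀ u v w : P, br (br u v) w + br (br v w) u + br (br w u) v = 0) ∧
  (∀ u v w : P, br u (mul v w) = mul (br u v) w + mul v (br u w))

def idm (k M : Type) [Field k] [AddCommGroup M] [Module k M] : M →ₗ[k] M :=
  LinearMap.id

def tau (k M : Type) [Field k] [AddCommGroup M] [Module k M] :
    M ⊗[k] M →ₗ[k] M ⊗[k] M :=
  (TensorProduct.comm k M M).toLinearMap

def unassoc (k M : Type) [Field k] [AddCommGroup M] [Module k M] :
    M ⊗[k] (M ⊗[k] M) →ₗ[k] (M ⊗[k] M) ⊗[k] M :=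
  (TensorProduct.assoc k M M M).symm.toLinearMap

def intch (k A B : Type) [Field k] [AddCommGroup A] [Module k A]
    [AddCommGroup B] [Module k B] :
    (A ⊗[k] A) ⊗[k] (B ⊗[k] B) →ₗ[k] (A ⊗[k] B) ⊗[k] (A ⊗[k] B) :=
  (TensorProduct.tensorTensorTensorComm k A A B B).toLinearMap

def IsZinbielCo {k A : Type} [Field k] [AddCommGroup A] [Module k A]
    (ϑ : A →ₗ[k] A ⊗[k] A) : Prop :=
  ∀ a : A,
    TensorProduct.map ϑ (idm k A) (ϑ a)
      + TensorProduct.map (tau k A) (idm k A) (TensorProduct.map ϑ (idm k A) (ϑ a))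
    = unassoc k A (TensorProduct.map (idm k A) ϑ (ϑ a))

def IsPermCo {k B : Type} [Field k] [AddCommGroup B] [Module k B]
    (ν : B →ₗ[k] B ⊗[k] B) : Prop :=
  ∀ b : B,
    TensorProduct.map ν (idm k B) (ν b)
      = unassoc k B (TensorProduct.map (idm k B) ν (ν b)) ∧
    TensorProduct.map ν (idm k B) (ν b)
      = TensorProduct.map (tau k B) (idm k B) (TensorProduct.map ν (idm k B) (ν b))

def IsPreLieCo {k A : Type} [Field k] [AddCommGroup A] [Module k A]
    (θ : A →ₗ[k] A ⊗[k] A) : Prop :=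
  ∀ a : A,
    unassoc k A (TensorProduct.map (idm k A) θ (θ a))
      - TensorProduct.map (tau k A) (idm k A)
          (unassoc k A (TensorProduct.map (idm k A) θ (θ a)))
    = TensorProduct.map θ (idm k A) (θ a)
      - TensorProduct.map (tau k A) (idm k A) (TensorProduct.map θ (idm k A) (θ a))

def Zexp {k A : Type} [Field k] [AddCommGroup A] [Module k A]
    (ast : A →ₗ[k] A →ₗ[k] A) {p : ℕ} (x y : Fin p → A) : (A ⊗[k] A) ⊗[k] A :=
  ∑ i : Fin p, ∑ j : Fin p,
    (((ast (x i) (x j)) ⊗ₜ[k] (y j)) ⊗ₜ[k] (y i)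
      + ((y j) ⊗ₜ[k] (ast (x i) (x j))) ⊗ₜ[k] (y i)
      + ((x i) ⊗ₜ[k] (x j)) ⊗ₜ[k] (ast (y i) (y j))
      + ((x j) ⊗ₜ[k] (x i)) ⊗ₜ[k] (ast (y i) (y j))
      - ((x i) ⊗ₜ[k] (ast (y i) (x j))) ⊗ₜ[k] (y j)
      - ((x j) ⊗ₜ[k] (ast (x i) (y j))) ⊗ₜ[k] (y i)
      - ((ast (x i) (y j)) ⊗ₜ[k] (x j)) ⊗ₜ[k] (y i)
      - ((ast (y i) (x j)) ⊗ₜ[k] (x i)) ⊗ₜ[k] (y j))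

def PLexp {k A : Type} [Field k] [AddCommGroup A] [Module k A]
    (circ : A →ₗ[k] A →ₗ[k] A) {p : ℕ} (x y : Fin p → A) : (A ⊗[k] A) ⊗[k] A :=
  ∑ i : Fin p, ∑ j : Fin p,
    (((circ (x i) (x j)) ⊗ₜ[k] (y j)) ⊗ₜ[k] (y i)
      + ((x j) ⊗ₜ[k] (circ (x i) (y j))) ⊗ₜ[k] (y i)
      + ((circ (y i) (x j)) ⊗ₜ[k] (x i)) ⊗ₜ[k] (y j)
      + ((x j) ⊗ₜ[k] (x i)) ⊗ₜ[k] (circ (y i) (y j))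
      - ((y j) ⊗ₜ[k] (circ (x i) (x j))) ⊗ₜ[k] (y i)
      - ((x i) ⊗ₜ[k] (circ (y i) (x j))) ⊗ₜ[k] (y j)
      - ((circ (x i) (y j)) ⊗ₜ[k] (x j)) ⊗ₜ[k] (y i)
      - ((x i) ⊗ₜ[k] (x j)) ⊗ₜ[k] (circ (y i) (y j)))

def AYexp {k P : Type} [Field k] [AddCommGroup P] [Module k P]
    (m : P →ₗ[k] P →ₗ[k] P) {ι : Type} [Fintype ι] (u v : ι → P) :
    (P ⊗[k] P) ⊗[k] P :=
  ∑ α : ι, ∑ β : ι,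
    (((m (u α) (u β)) ⊗ₜ[k] (v α)) ⊗ₜ[k] (v β)
      + ((u α) ⊗ₜ[k] (m (v α) (u β))) ⊗ₜ[k] (v β)
      - ((u β) ⊗ₜ[k] (u α)) ⊗ₜ[k] (m (v α) (v β)))

def CYexp {k P : Type} [Field k] [AddCommGroup P] [Module k P]
    (br : P →ₗ[k] P →ₗ[k] P) {ι : Type} [Fintype ι] (u v : ι → P) :
    (P ⊗[k] P) ⊗[k] P :=
  ∑ α : ι, ∑ β : ι,
    (((br (u α) (u β)) ⊗ₜ[k] (v α)) ⊗ₜ[k] (v β)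
      + ((u α) ⊗ₜ[k] (u β)) ⊗ₜ[k] (br (v α) (v β))
      + ((u α) ⊗ₜ[k] (br (v α) (u β))) ⊗ₜ[k] (v β))

def sharp (k : Type) [Field k] {V : Type} [AddCommGroup V] [Module k V]
    (s : V ⊗[k] V) (ξ : V →ₗ[k] k) : V :=
  TensorProduct.lid k V (LinearMap.rTensor V ξ s)

abbrev PermB (k : Type) [Field k] : Type := ((ℤ × ℤ) × Fin 2) →₀ k

def bB (k : Type) [Field k] (i₁ i₂ : ℤ) (s : Fin 2) : PermB k :=
  Finsupp.single ((i₁, i₂), s) 1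

set_option maxHeartbeats 2000000 in
theorem statement11 (k A B : Type) [Field k] [CharZero k]
    [AddCommGroup A] [Module k A] [FiniteDimensional k A]
    [AddCommGroup B] [Module k B] [FiniteDimensional k B]
    (ast circ : A →ₗ[k] A →ₗ[k] A) (hA : IsPrePoisson ast circ)
    (r : A ⊗[k] A) (p : ℕ) (x y : Fin p → A)
    (hr : r = ∑ i : Fin p, (x i) ⊗ₜ[k] (y i))
    (hsym : (TensorProduct.comm k A A) r = r)
    (hZ : Zexp ast x y = 0) (hPL : PLexp circ x y = 0)
    (ϑr : A →ₗ[k] A ⊗[k] A)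
    (hϑr : ∀ a : A,
      ϑr a = TensorProduct.map (idm k A) (ast a + ast.flip a) r
        - TensorProduct.map (ast a) (idm k A) r)
    (θr : A →ₗ[k] A ⊗[k] A)
    (hθr : ∀ a : A,
      θr a = TensorProduct.map (circ a) (idm k A) r
        + TensorProduct.map (idm k A) (circ a - circ.flip a) r)
    (dia : B →ₗ[k] B →ₗ[k] B) (hdia : IsPerm dia)
    (ω : B →ₗ[k] B →ₗ[k] k)
    (hω₁ : ∀ b₁ b₂ : B, ω b₁ b₂ = - ω b₂ b₁)
    (hω₂ : ∀ b₁ : B, (∀ b₂ : B, ω b₁ b₂ = 0) → b₁ = 0)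
    (hω₃ : ∀ b₁ b₂ b₃ : B, ω (dia b₁ b₂) b₃ = ω b₁ (dia b₂ b₃ - dia b₃ b₂))
    (n : ℕ) (e : Module.Basis (Fin n) k B) (f : Fin n → B)
    (hdual : ∀ i j : Fin n, ω (f i) (e j) = if i = j then 1 else 0)
    (ωh : B ⊗[k] B →ₗ[k] B ⊗[k] B →ₗ[k] k)
    (hωh : ∀ u₁ u₂ v₁ v₂ : B, ωh (u₁ ⊗ₜ[k] u₂) (v₁ ⊗ₜ[k] v₂) = ω u₁ v₁ * ω u₂ v₂)
    (ν : B →ₗ[k] B ⊗[k] B)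
    (hν : ∀ b₁ b₂ b₃ : B, ωh (ν b₁) (b₂ ⊗ₜ[k] b₃) = - ω b₁ (dia b₂ b₃))
    (m : A ⊗[k] B →ₗ[k] A ⊗[k] B →ₗ[k] A ⊗[k] B)
    (hm : ∀ (a₁ a₂ : A) (b₁ b₂ : B),
      m (a₁ ⊗ₜ[k] b₁) (a₂ ⊗ₜ[k] b₂)
        = (ast a₁ a₂) ⊗ₜ[k] (dia b₁ b₂) + (ast a₂ a₁) ⊗ₜ[k] (dia b₂ b₁))
    (br : A ⊗[k] B →ₗ[k] A ⊗[k] B →ₗ[k] A ⊗[k] B)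
    (hbr : ∀ (a₁ a₂ : A) (b₁ b₂ : B),
      br (a₁ ⊗ₜ[k] b₁) (a₂ ⊗ₜ[k] b₂)
        = (circ a₁ a₂) ⊗ₜ[k] (dia b₁ b₂) - (circ a₂ a₁) ⊗ₜ[k] (dia b₂ b₁))
    (Δ : A ⊗[k] B →ₗ[k] (A ⊗[k] B) ⊗[k] (A ⊗[k] B))
    (hΔ : ∀ (a : A) (b : B),
      Δ (a ⊗ₜ[k] b)
        = intch k A (B) ((ϑr a) ⊗ₜ[k] (ν b))
          + tau k (A ⊗[k] B) (intch k A (B) ((ϑr a) ⊗ₜ[k] (ν b))))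
    (δ : A ⊗[k] B →ₗ[k] (A ⊗[k] B) ⊗[k] (A ⊗[k] B))
    (hδ : ∀ (a : A) (b : B),
      δ (a ⊗ₜ[k] b)
        = intch k A (B) ((θr a) ⊗ₜ[k] (ν b))
          - tau k (A ⊗[k] B) (intch k A (B) ((θr a) ⊗ₜ[k] (ν b))))
    (rhat : (A ⊗[k] B) ⊗[k] (A ⊗[k] B))
    (hrhat : rhat = ∑ i : Fin p, ∑ j : Fin n,
      ((x i) ⊗ₜ[k] (e j : B)) ⊗ₜ[k] ((y i) ⊗ₜ[k] (f j)))
    :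
    (∀ (a : A) (b : B),
      Δ (a ⊗ₜ[k] b)
        = TensorProduct.map (idm k (A ⊗[k] B)) (m (a ⊗ₜ[k] b)) rhat
          - TensorProduct.map (m (a ⊗ₜ[k] b)) (idm k (A ⊗[k] B)) rhat) ∧
    (∀ (a : A) (b : B),
      δ (a ⊗ₜ[k] b)
        = TensorProduct.map (idm k (A ⊗[k] B)) (br (a ⊗ₜ[k] b)) rhat
          + TensorProduct.map (br (a ⊗ₜ[k] b)) (idm k (A ⊗[k] B)) rhat) := by
  classical
  -- expansion along the basis e with "dual basis" f
  have hE1 : ∀ u : B, ∑ j, ω (f j) u • e j = u := by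
    have h : (∑ j, (ω (f j)).smulRight (e j) : B →ₗ[k] B) = LinearMap.id := by
      apply e.ext; intro l
      simp [LinearMap.sum_apply, hdual, Finset.sum_ite_eq']
    intro u
    have := congrArg (fun g : B →ₗ[k] B => g u) h
    simpa [LinearMap.sum_apply] using this
  have hE2 : ∀ u : B, ∑ j, ω u (e j) • f j = u := by
    intro u
    have key : ∀ c : B, ω ((∑ j, ω u (e j) • f j) - u) c = 0 := by
      intro c
      have hc : ω u c = ∑ j, ω (f j) c * ω u (e j) := by
        conv_lhs => rw [← hE1 c]
        simp [Finset.mul_sum, mul_comm]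
      simp [map_sub, map_sum, LinearMap.sum_apply, hc, mul_comm]
    have := hω₂ _ key
    rw [sub_eq_zero] at this; exact this
  -- nondegeneracy of ωh
  have hND : ∀ D : B ⊗[k] B, (∀ c₂ c₃ : B, ωh D (c₂ ⊗ₜ[k] c₃) = 0) → D = 0 := by
    intro D hD
    rw [← (e.tensorProduct e).forall_coord_eq_zero_iff]
    intro jl
    have hco : ((e.tensorProduct e).coord jl : B ⊗[k] B →ₗ[k] k)
        = ωh.flip (f jl.1 ⊗ₜ[k] f jl.2) := by
      apply (e.tensorProduct e).ext
      intro i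
      have key : ω (e i.1) (f jl.1) * ω (e i.2) (f jl.2)
          = if i = jl then 1 else 0 := by
        rw [hω₁ (e i.1), hω₁ (e i.2), hdual, hdual]
        by_cases h1 : jl.1 = i.1 <;> by_cases h2 : jl.2 = i.2 <;>
          simp [h1, h2, Prod.ext_iff, eq_comm]
      have hb : (e.tensorProduct e) i = e i.1 ⊗ₜ[k] e i.2 := Module.Basis.tensorProduct_apply' e e i
      simp [← hb, Module.Basis.coord_apply, Module.Basis.repr_self, hωh, key, Finsupp.single_apply, eq_comm]
      rw [hb]
      simp [hωh, key, Finsupp.single_apply, eq_comm]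
    rw [hco]
    exact hD _ _
  -- the explicit formula for ν
  have hNU : ∀ b : B, ν b = ∑ j, (dia b (e j) - dia (e j) b) ⊗ₜ[k] f j := by
    intro b
    have hsc : ∀ (c₂ : B) (j : Fin n),
        ω (dia b (e j) - dia (e j) b) c₂ = - ω b (dia c₂ (e j)) := by
      intro c₂ j
      have h3 := hω₃ c₂ (e j) b
      have h4 := hω₁ (dia b (e j)) c₂
      have h5 := hω₁ (dia (e j) b) c₂
      have h6 := hω₁ b (dia c₂ (e j))
      simp only [map_sub, LinearMap.sub_apply] at h3 ⊢
      linear_combination h4 - h5 + h6 - h3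
    have key : ∀ c₂ c₃ : B,
        ωh (ν b - ∑ j, (dia b (e j) - dia (e j) b) ⊗ₜ[k] f j) (c₂ ⊗ₜ[k] c₃) = 0 := by
      intro c₂ c₃
      rw [map_sub, LinearMap.sub_apply, hν, sub_eq_zero]
      have h1 : ωh (∑ j, (dia b (e j) - dia (e j) b) ⊗ₜ[k] f j) (c₂ ⊗ₜ[k] c₃)
          = ∑ j, ω (dia b (e j) - dia (e j) b) c₂ * ω (f j) c₃ := by
        simp [map_sum, LinearMap.sum_apply, hωh]
      rw [h1]
      have h2 : - ω b (dia c₂ c₃) = ∑ j, (- ω b (dia c₂ (e j))) * ω (f j) c₃ := by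
        conv_lhs => rw [← hE1 c₃]
        simp [map_sum, Finset.mul_sum, mul_comm]
      rw [h2]
      apply Finset.sum_congr rfl
      intro j _
      rw [hsc]
    have := hND _ key
    rw [sub_eq_zero] at this; exact this
  -- identity I1
  have hI1 : ∀ b : B, (∑ j, (dia b (e j)) ⊗ₜ[k] f j) = ∑ j, (e j) ⊗ₜ[k] (dia b (f j)) := by
    intro b
    have hL : (∑ l, (dia b (e l)) ⊗ₜ[k] f l)
        = ∑ l, ∑ j, ω (f j) (dia b (e l)) • ((e j) ⊗ₜ[k] f l) := by
      apply Finset.sum_congr rfl; intro l _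
      conv_lhs => rw [← hE1 (dia b (e l))]
      rw [sum_tmul]
      exact Finset.sum_congr rfl fun j _ => by rw [smul_tmul']
    have hR : (∑ j, (e j) ⊗ₜ[k] (dia b (f j)))
        = ∑ j, ∑ l, ω (dia b (f j)) (e l) • ((e j) ⊗ₜ[k] f l) := by
      apply Finset.sum_congr rfl; intro j _
      conv_lhs => rw [← hE2 (dia b (f j))]
      rw [tmul_sum]
      exact Finset.sum_congr rfl fun l _ => by rw [tmul_smul]
    rw [hL, hR, Finset.sum_comm]
    apply Finset.sum_congr rfl; intro l _
    apply Finset.sum_congr rfl; intro j _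
    congr 1
    rw [hω₁ (f l) (dia b (e j)), hω₃ b (e j) (f l), hω₃ b (f l) (e j)]
    simp only [map_sub]
    ring
  -- identity I2
  have hI2 : ∀ b : B, (∑ j, (dia b (e j) - dia (e j) b) ⊗ₜ[k] f j)
      = ∑ j, (e j) ⊗ₜ[k] (dia (f j) b) := by
    intro b
    have hL : (∑ l, (dia b (e l) - dia (e l) b) ⊗ₜ[k] f l)
        = ∑ l, ∑ j, ω (f j) (dia b (e l) - dia (e l) b) • ((e j) ⊗ₜ[k] f l) := by
      apply Finset.sum_congr rfl; intro l _
      conv_lhs => rw [← hE1 (dia b (e l) - dia (e l) b)]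
      rw [sum_tmul]
      exact Finset.sum_congr rfl fun j _ => by rw [smul_tmul']
    have hR : (∑ j, (e j) ⊗ₜ[k] (dia (f j) b))
        = ∑ j, ∑ l, ω (dia (f j) b) (e l) • ((e j) ⊗ₜ[k] f l) := by
      apply Finset.sum_congr rfl; intro j _
      conv_lhs => rw [← hE2 (dia (f j) b)]
      rw [tmul_sum]
      exact Finset.sum_congr rfl fun l _ => by rw [tmul_smul]
    rw [hL, hR, Finset.sum_comm]
    apply Finset.sum_congr rfl; intro l _
    apply Finset.sum_congr rfl; intro j _
    congr 1
    exact (hω₃ (f l) b (e j)).symm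
  -- antisymmetry of ∑ e j ⊗ f j
  have hAnti : ((∑ j, (f j) ⊗ₜ[k] (e j)) : B ⊗[k] B) = - ∑ j, (e j) ⊗ₜ[k] (f j) := by
    have hinner : ∀ i, ∑ j, ω (f i) (f j) • e j = - f i := by
      intro i
      have h0 := hE1 (f i)
      calc ∑ j, ω (f i) (f j) • e j = ∑ j, -(ω (f j) (f i) • e j) := by
            apply Finset.sum_congr rfl; intro j _
            rw [hω₁ (f i) (f j), neg_smul]
        _ = - f i := by rw [Finset.sum_neg_distrib, h0]
    have hL : ((∑ j, (f j) ⊗ₜ[k] (e j)) : B ⊗[k] B)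
        = ∑ j, ∑ i, ω (f i) (f j) • ((e i) ⊗ₜ[k] (e j)) := by
      apply Finset.sum_congr rfl; intro j _
      conv_lhs => rw [← hE1 (f j)]
      rw [sum_tmul]
      exact Finset.sum_congr rfl fun i _ => by rw [smul_tmul']
    rw [hL, Finset.sum_comm]
    calc ∑ i, ∑ j, ω (f i) (f j) • ((e i) ⊗ₜ[k] (e j))
        = ∑ i, (e i) ⊗ₜ[k] (- f i) := by
          apply Finset.sum_congr rfl; intro i _
          rw [← hinner i, tmul_sum]
          exact Finset.sum_congr rfl fun j _ => (tmul_smul _ _ _).symm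
      _ = - ∑ i, (e i) ⊗ₜ[k] (f i) := by
          simp [tmul_neg]
  -- symmetry of r
  have hmapsym : ∀ g h : A →ₗ[k] A,
      (∑ i, (g (y i)) ⊗ₜ[k] (h (x i))) = ∑ i, (g (x i)) ⊗ₜ[k] (h (y i)) := by
    intro g h
    have hs : (∑ i, (y i) ⊗ₜ[k] (x i)) = ∑ i, (x i) ⊗ₜ[k] (y i) := by
      have := hsym
      rw [hr] at this
      simpa [map_sum] using this
    have := congrArg (TensorProduct.map g h) hs
    simpa [map_sum] using this
  -- interchange and flip
  have Ltau : ∀ (X : A ⊗[k] A) (Y : B ⊗[k] B),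
      tau k (A ⊗[k] B) (intch k A B (X ⊗ₜ[k] Y))
        = intch k A B ((tau k A X) ⊗ₜ[k] (tau k B Y)) := by
    intro X Y
    induction X using TensorProduct.induction_on with
    | zero => simp
    | tmul u v =>
      induction Y using TensorProduct.induction_on with
      | zero => simp
      | tmul s t => simp [intch, tau, TensorProduct.tensorTensorTensorComm_tmul]
      | add Y1 Y2 h1 h2 =>
        simp only [tmul_add, map_add, h1, h2]
    | add X1 X2 h1 h2 =>
      simp only [add_tmul, map_add, h1, h2]
  constructor
  · intro a b
    -- Zinbiel part
    have hϑexp : ϑr a = ((∑ i, (x i) ⊗ₜ[k] (ast a (y i)))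
        + ∑ i, (x i) ⊗ₜ[k] (ast (y i) a))
        - ∑ i, (ast a (x i)) ⊗ₜ[k] (y i) := by
      rw [hϑr a, hr]
      simp [map_sum, TensorProduct.map_tmul, idm, tmul_add, Finset.sum_add_distrib,
        LinearMap.add_apply, LinearMap.flip_apply]
    have hτϑ : tau k A (ϑr a) = ((∑ i, (ast a (x i)) ⊗ₜ[k] (y i))
        + ∑ i, (ast (x i) a) ⊗ₜ[k] (y i))
        - ∑ i, (x i) ⊗ₜ[k] (ast a (y i)) := by
      have h1 : (∑ i, (ast a (y i)) ⊗ₜ[k] (x i)) = ∑ i, (ast a (x i)) ⊗ₜ[k] (y i) := by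
        simpa using hmapsym (ast a) LinearMap.id
      have h2 : (∑ i, (ast (y i) a) ⊗ₜ[k] (x i)) = ∑ i, (ast (x i) a) ⊗ₜ[k] (y i) := by
        simpa using hmapsym (ast.flip a) LinearMap.id
      have h3 : (∑ i, (y i) ⊗ₜ[k] (ast a (x i))) = ∑ i, (x i) ⊗ₜ[k] (ast a (y i)) := by
        simpa using hmapsym LinearMap.id (ast a)
      rw [hϑexp]
      simp only [map_sub, map_add, map_sum, tau, LinearEquiv.coe_coe, TensorProduct.comm_tmul]
      rw [h1, h2, h3]
    have hνb : ν b = (∑ j, (dia b (e j)) ⊗ₜ[k] f j) - ∑ j, (dia (e j) b) ⊗ₜ[k] f j := by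
      rw [hNU b, ← Finset.sum_sub_distrib]
      exact Finset.sum_congr rfl fun j _ => by rw [sub_tmul]
    have hτν : tau k B (ν b) = - ∑ j, (dia (e j) b) ⊗ₜ[k] f j := by
      have h4 := congrArg (TensorProduct.map ((dia.flip b)) (LinearMap.id : B →ₗ[k] B)) hAnti
      simp only [map_sum, map_neg, TensorProduct.map_tmul, LinearMap.flip_apply,
        LinearMap.id_coe, id_eq] at h4
      rw [hNU b, hI2 b]
      simp only [map_sum, tau, LinearEquiv.coe_coe, TensorProduct.comm_tmul]
      exact h4
    have hR1 : TensorProduct.map (idm k (A ⊗[k] B)) (m (a ⊗ₜ[k] b)) rhat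
        = intch k A B ((∑ i, (x i) ⊗ₜ[k] (ast a (y i))) ⊗ₜ[k] (∑ j, (e j) ⊗ₜ[k] (dia b (f j)))
          + (∑ i, (x i) ⊗ₜ[k] (ast (y i) a)) ⊗ₜ[k] (∑ j, (e j) ⊗ₜ[k] (dia (f j) b))) := by
      rw [hrhat]
      simp [map_sum, TensorProduct.map_tmul, idm, hm, tmul_add, Finset.sum_add_distrib,
        intch, sum_tmul, tmul_sum, TensorProduct.tensorTensorTensorComm_tmul]
      congr 1 <;> rw [Finset.sum_comm]
    have hR2 : TensorProduct.map (m (a ⊗ₜ[k] b)) (idm k (A ⊗[k] B)) rhat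
        = intch k A B ((∑ i, (ast a (x i)) ⊗ₜ[k] (y i)) ⊗ₜ[k] (∑ j, (dia b (e j)) ⊗ₜ[k] f j)
          + (∑ i, (ast (x i) a) ⊗ₜ[k] (y i)) ⊗ₜ[k] (∑ j, (dia (e j) b) ⊗ₜ[k] f j)) := by
      rw [hrhat]
      simp [map_sum, TensorProduct.map_tmul, idm, hm, add_tmul, Finset.sum_add_distrib,
        intch, sum_tmul, tmul_sum, TensorProduct.tensorTensorTensorComm_tmul]
      congr 1 <;> rw [Finset.sum_comm]
    rw [hΔ a b, Ltau, ← map_add, hR1, hR2, ← map_sub]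
    congr 1
    rw [hτϑ, hτν, hϑexp, hνb, ← hI1 b, ← hI2 b]
    have hI2' : (∑ j, (e j) ⊗ₜ[k] (dia (f j) b))
        = (∑ j, (dia b (e j)) ⊗ₜ[k] f j) - ∑ j, (dia (e j) b) ⊗ₜ[k] f j := by
      rw [← hI2 b, ← Finset.sum_sub_distrib]
      exact Finset.sum_congr rfl fun j _ => by rw [sub_tmul]
    rw [← hI2 b] at hI2'
    rw [hI2']
    simp only [tmul_sub, sub_tmul, add_tmul, tmul_add, tmul_neg, neg_tmul]
    abel
  · intro a b
    have hθexp : θr a = ((∑ i, (circ a (x i)) ⊗ₜ[k] (y i))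
        + ∑ i, (x i) ⊗ₜ[k] (circ a (y i)))
        - ∑ i, (x i) ⊗ₜ[k] (circ (y i) a) := by
      rw [hθr a, hr]
      simp [map_sum, TensorProduct.map_tmul, idm, tmul_sub, Finset.sum_add_distrib,
        Finset.sum_sub_distrib, LinearMap.sub_apply, LinearMap.flip_apply]
      abel
    have hτθ : tau k A (θr a) = ((∑ i, (x i) ⊗ₜ[k] (circ a (y i)))
        + ∑ i, (circ a (x i)) ⊗ₜ[k] (y i))
        - ∑ i, (circ (x i) a) ⊗ₜ[k] (y i) := by
      have h1 : (∑ i, (y i) ⊗ₜ[k] (circ a (x i))) = ∑ i, (x i) ⊗ₜ[k] (circ a (y i)) := by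
        simpa using hmapsym LinearMap.id (circ a)
      have h2 : (∑ i, (circ a (y i)) ⊗ₜ[k] (x i)) = ∑ i, (circ a (x i)) ⊗ₜ[k] (y i) := by
        simpa using hmapsym (circ a) LinearMap.id
      have h3 : (∑ i, (circ (y i) a) ⊗ₜ[k] (x i)) = ∑ i, (circ (x i) a) ⊗ₜ[k] (y i) := by
        simpa using hmapsym (circ.flip a) LinearMap.id
      rw [hθexp]
      simp only [map_sub, map_add, map_sum, tau, LinearEquiv.coe_coe, TensorProduct.comm_tmul]
      rw [h1, h2, h3]
    have hνb : ν b = (∑ j, (dia b (e j)) ⊗ₜ[k] f j) - ∑ j, (dia (e j) b) ⊗ₜ[k] f j := by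
      rw [hNU b, ← Finset.sum_sub_distrib]
      exact Finset.sum_congr rfl fun j _ => by rw [sub_tmul]
    have hτν : tau k B (ν b) = - ∑ j, (dia (e j) b) ⊗ₜ[k] f j := by
      have h4 := congrArg (TensorProduct.map ((dia.flip b)) (LinearMap.id : B →ₗ[k] B)) hAnti
      simp only [map_sum, map_neg, TensorProduct.map_tmul, LinearMap.flip_apply,
        LinearMap.id_coe, id_eq] at h4
      rw [hNU b, hI2 b]
      simp only [map_sum, tau, LinearEquiv.coe_coe, TensorProduct.comm_tmul]
      exact h4
    have hR1 : TensorProduct.map (idm k (A ⊗[k] B)) (br (a ⊗ₜ[k] b)) rhat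
        = intch k A B ((∑ i, (x i) ⊗ₜ[k] (circ a (y i))) ⊗ₜ[k] (∑ j, (e j) ⊗ₜ[k] (dia b (f j)))
          - (∑ i, (x i) ⊗ₜ[k] (circ (y i) a)) ⊗ₜ[k] (∑ j, (e j) ⊗ₜ[k] (dia (f j) b))) := by
      rw [hrhat]
      simp [map_sum, TensorProduct.map_tmul, idm, hbr, tmul_sub, Finset.sum_sub_distrib,
        intch, sum_tmul, tmul_sum, TensorProduct.tensorTensorTensorComm_tmul]
      congr 1 <;> rw [Finset.sum_comm]
    have hR2 : TensorProduct.map (br (a ⊗ₜ[k] b)) (idm k (A ⊗[k] B)) rhat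
        = intch k A B ((∑ i, (circ a (x i)) ⊗ₜ[k] (y i)) ⊗ₜ[k] (∑ j, (dia b (e j)) ⊗ₜ[k] f j)
          - (∑ i, (circ (x i) a) ⊗ₜ[k] (y i)) ⊗ₜ[k] (∑ j, (dia (e j) b) ⊗ₜ[k] f j)) := by
      rw [hrhat]
      simp [map_sum, TensorProduct.map_tmul, idm, hbr, sub_tmul, Finset.sum_sub_distrib,
        intch, sum_tmul, tmul_sum, TensorProduct.tensorTensorTensorComm_tmul]
      congr 1 <;> rw [Finset.sum_comm]
    rw [hδ a b, Ltau, ← map_sub, hR1, hR2, ← map_add]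
    congr 1
    rw [hτθ, hτν, hθexp, hνb, ← hI1 b]
    have hI2' : (∑ j, (e j) ⊗ₜ[k] (dia (f j) b))
        = (∑ j, (dia b (e j)) ⊗ₜ[k] f j) - ∑ j, (dia (e j) b) ⊗ₜ[k] f j := by
      rw [← hI2 b, ← Finset.sum_sub_distrib]
      exact Finset.sum_congr rfl fun j _ => by rw [sub_tmul]
    rw [hI2']
    simp only [tmul_sub, sub_tmul, add_tmul, tmul_add, tmul_neg, neg_tmul]
    abel
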